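/- Let E and F be real Hilbert spaces, K : E → F a bounded operator, N : E → ℝ a seminorm, and M = sup_{‖ψ‖_F ≤ 1} N(K*ψ) < ∞. Then for every α > 0: (a) the identity (αI + K*K)^{-1} = α^{-1} ( I − K*(αI + KK*)^{-1}K ) holds; and (b) for every f ∈ E, N( (αI + K*K)^{-1} f ) ≤ α^{-1} N(f) + M ‖f‖ / (2 α^{3/2}). -/

import Mathlib

open ContinuousLinearMap RealInnerProductSpace

lemma isUnit_of_coercive' {V : Type*} [NormedAddCommGroup V] [InnerProductSpace ℝ V]
    [CompleteSpace V] (S : V →L[ℝ] V) {c : ℝ} (hc : 0 < c)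
    (h : ∀ x, c * (‖x‖ * ‖x‖) ≤ ⟪S x, x⟫) : IsUnit S := by
  have hbelow : ∀ x, c * ‖x‖ ≤ ‖S x‖ := by
    intro x
    rcases eq_or_lt_of_le (norm_nonneg x) with h0 | h0
    · simp [← h0]
    · have h1 := (h x).trans (real_inner_le_norm (S x) x)
      rw [← mul_assoc] at h1
      exact le_of_mul_le_mul_right h1 h0
  have hanti : AntilipschitzWith (⟨c⁻¹, (inv_pos.mpr hc).le⟩ : NNReal) S := by
    apply ContinuousLinearMap.antilipschitz_of_bound
    intro x
    change ‖x‖ ≤ c⁻¹ * ‖S x‖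
    rw [le_inv_mul_iff₀ hc]
    exact hbelow x
  have hker : S.ker = ⊥ := (LinearMap.ker_eq_bot (f := (S : V →ₗ[ℝ] V))).mpr hanti.injective
  have hclosed : IsClosed (LinearMap.range (S : V →ₗ[ℝ] V) : Set V) :=
    hanti.isClosed_range S.uniformContinuous
  have hrange : LinearMap.range (S : V →ₗ[ℝ] V) = ⊤ := by
    haveI := hclosed.completeSpace_coe
    rw [← (LinearMap.range (S : V →ₗ[ℝ] V)).orthogonal_orthogonal, Submodule.eq_top_iff']
    intro v w hw
    have hw0 : w = 0 := by
      have h1 : ⟪S w, w⟫ = 0 := hw _ ⟨w, rfl⟩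
      have h2 := h w
      rw [h1] at h2
      by_contra hne
      have hpos : 0 < ‖w‖ := norm_pos_iff.mpr hne
      nlinarith [mul_pos hc (mul_pos hpos hpos)]
    simp [hw0]
  let e := ContinuousLinearEquiv.ofBijective S hker hrange
  have he : ∀ x, e x = S x := fun x => rfl
  refine ⟨⟨S, e.symm.toContinuousLinearMap, ?_, ?_⟩, rfl⟩
  · ext x
    simpa [ContinuousLinearMap.mul_apply, ← he] using e.apply_symm_apply x
  · ext x
    simpa [ContinuousLinearMap.mul_apply, ← he] using e.symm_apply_apply x

/-- The mixed norm `M(A) = sup_{‖ψ‖ ≤ 1} N (A ψ)` of an operator `A : F →L E` relative to a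
seminorm `N` on `E`. -/
noncomputable def mixedNorm {E F : Type*} [NormedAddCommGroup E] [NormedSpace ℝ E]
    [NormedAddCommGroup F] [NormedSpace ℝ F] (N : Seminorm ℝ E) (A : F →L[ℝ] E) : ℝ :=
  sSup {x : ℝ | ∃ ψ : F, ‖ψ‖ ≤ 1 ∧ x = N (A ψ)}

set_option maxHeartbeats 1000000 in
theorem stmt10
    {E F : Type*} [NormedAddCommGroup E] [InnerProductSpace ℝ E] [CompleteSpace E]
    [NormedAddCommGroup F] [InnerProductSpace ℝ F] [CompleteSpace F]
    (K : E →L[ℝ] F) (N : Seminorm ℝ E) (M : ℝ)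
    (hbdd : BddAbove {x : ℝ | ∃ ψ : F, ‖ψ‖ ≤ 1 ∧ x = N (adjoint K ψ)})
    (hM : M = mixedNorm N (adjoint K))
    (α : ℝ) (hα : 0 < α) :
    Ring.inverse (α • (1 : E →L[ℝ] E) + adjoint K ∘L K) =
      α⁻¹ • ((1 : E →L[ℝ] E)
        - adjoint K ∘L (Ring.inverse (α • (1 : F →L[ℝ] F) + K ∘L adjoint K) ∘L K))
    ∧ ∀ f : E, N (Ring.inverse (α • (1 : E →L[ℝ] E) + adjoint K ∘L K) f) ≤
        α⁻¹ * N f + M * ‖f‖ / (2 * α ^ ((3 : ℝ) / 2)) := by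
  set A : F →L[ℝ] E := adjoint K with hAdef
  set S : F →L[ℝ] F := α • (1 : F →L[ℝ] F) + K ∘L A with hSdef
  set T : E →L[ℝ] E := α • (1 : E →L[ℝ] E) + A ∘L K with hTdef
  have hSapp : ∀ y : F, S y = α • y + K (A y) := by
    intro y; simp [hSdef, ContinuousLinearMap.add_apply, ContinuousLinearMap.smul_apply,
      ContinuousLinearMap.one_apply, ContinuousLinearMap.comp_apply]
  have hTapp : ∀ x : E, T x = α • x + A (K x) := by
    intro x; simp [hTdef, ContinuousLinearMap.add_apply, ContinuousLinearMap.smul_apply,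
      ContinuousLinearMap.one_apply, ContinuousLinearMap.comp_apply]
  have hS : IsUnit S := by
    apply isUnit_of_coercive' S hα
    intro x
    have h1 : ⟪S x, x⟫ = α * ⟪x, x⟫ + ⟪A x, A x⟫ := by
      rw [hSapp, inner_add_left, real_inner_smul_left, hAdef,
        ContinuousLinearMap.adjoint_inner_right]
    have h2 : (0:ℝ) ≤ ⟪A x, A x⟫ := real_inner_self_nonneg
    rw [h1, real_inner_self_eq_norm_mul_norm]
    linarith
  set Sinv : F →L[ℝ] F := Ring.inverse S with hSinvdef
  have hmul1 : ∀ y : F, S (Sinv y) = y := by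
    intro y
    have h := Ring.mul_inverse_cancel S hS
    have := congrArg (fun (T : F →L[ℝ] F) => T y) h
    simpa [ContinuousLinearMap.mul_apply, ContinuousLinearMap.one_apply] using this
  have hmul2 : ∀ y : F, Sinv (S y) = y := by
    intro y
    have h := Ring.inverse_mul_cancel S hS
    have := congrArg (fun (T : F →L[ℝ] F) => T y) h
    simpa [ContinuousLinearMap.mul_apply, ContinuousLinearMap.one_apply] using this
  set R : E →L[ℝ] E := α⁻¹ • ((1 : E →L[ℝ] E) - A ∘L (Sinv ∘L K)) with hRdef
  have hRapp : ∀ x : E, R x = α⁻¹ • (x - A (Sinv (K x))) := by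
    intro x; simp [hRdef, ContinuousLinearMap.smul_apply, ContinuousLinearMap.sub_apply,
      ContinuousLinearMap.one_apply, ContinuousLinearMap.comp_apply]
  have hTR : T * R = 1 := by
    ext x
    set g : F := Sinv (K x) with hgdef
    have hg : S g = K x := hmul1 (K x)
    have hK : K x - K (A g) = α • g := by
      rw [← hg, hSapp, add_sub_cancel_right]
    have hAKg : A (K (x - A g)) = α • A g := by
      rw [map_sub, hK, map_smul]
    have : T (R x) = x := by
      rw [hTapp, hRapp, ← hgdef, map_smul, map_smul, hAKg, smul_smul, smul_smul,
        mul_inv_cancel₀ hα.ne', inv_mul_cancel₀ hα.ne', one_smul, one_smul, sub_add_cancel]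
    simpa [ContinuousLinearMap.mul_apply, ContinuousLinearMap.one_apply] using this
  have hRT : R * T = 1 := by
    ext x
    have hK2 : K (T x) = S (K x) := by
      rw [hTapp, hSapp, map_add, map_smul, hAdef]
    have : R (T x) = x := by
      rw [hRapp, hK2, hmul2, hTapp, add_sub_cancel_right, smul_smul,
        inv_mul_cancel₀ hα.ne', one_smul]
    simpa [ContinuousLinearMap.mul_apply, ContinuousLinearMap.one_apply] using this
  have ha : Ring.inverse T = R := by
    have hu : IsUnit T := ⟨⟨T, R, hTR, hRT⟩, rfl⟩
    calc Ring.inverse T = Ring.inverse ((⟨T, R, hTR, hRT⟩ : (E →L[ℝ] E)ˣ) : E →L[ℝ] E) := rfl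
      _ = R := Ring.inverse_unit _
  -- mixed-norm facts
  have hle1 : ∀ ψ : F, ‖ψ‖ ≤ 1 → N (A ψ) ≤ M := by
    intro ψ h
    rw [hM]
    exact le_csSup hbdd ⟨ψ, h, rfl⟩
  have hM0 : 0 ≤ M := by
    have := hle1 0 (by simp)
    simpa using this
  have hNM : ∀ ψ : F, N (A ψ) ≤ M * ‖ψ‖ := by
    intro ψ
    by_cases hψ : ψ = 0
    · simp [hψ]
    · have hψn : ‖ψ‖ ≠ 0 := norm_ne_zero_iff.mpr hψ
      have h2 := hle1 (‖ψ‖⁻¹ • ψ)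
        (by rw [norm_smul, norm_inv, norm_norm, inv_mul_cancel₀ hψn])
      calc N (A ψ) = ‖ψ‖ * N (A (‖ψ‖⁻¹ • ψ)) := by
            rw [map_smul, map_smul_eq_mul, norm_inv, norm_norm, ← mul_assoc,
              mul_inv_cancel₀ hψn, one_mul]
        _ ≤ ‖ψ‖ * M := mul_le_mul_of_nonneg_left h2 (norm_nonneg ψ)
        _ = M * ‖ψ‖ := mul_comm _ _
  refine ⟨ha, fun f => ?_⟩
  rw [ha]
  set g : F := Sinv (K f) with hgdef
  have hbound : ‖g‖ ≤ ‖f‖ / (2 * Real.sqrt α) := by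
    have hSg : S g = K f := hmul1 (K f)
    have e1 : α * (‖g‖ * ‖g‖) + ‖A g‖ * ‖A g‖ = ⟪f, A g⟫ := by
      have h0 : ⟪S g, g⟫ = ⟪K f, g⟫ := by rw [hSg]
      rw [hSapp, inner_add_left, real_inner_smul_left, real_inner_self_eq_norm_mul_norm] at h0
      rw [hAdef] at h0 ⊢
      simp only [← ContinuousLinearMap.adjoint_inner_right K] at h0
      rw [real_inner_self_eq_norm_mul_norm] at h0
      exact h0
    have e2 : ⟪f, A g⟫ ≤ ‖f‖ * ‖A g‖ := real_inner_le_norm f (A g)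
    have e3 : α * (‖g‖ * ‖g‖) ≤ ‖f‖ * ‖f‖ / 4 := by nlinarith [sq_nonneg (‖f‖ - 2 * ‖A g‖)]
    rw [le_div_iff₀ (by positivity)]
    nlinarith [Real.sq_sqrt hα.le, Real.sqrt_nonneg α, norm_nonneg g, norm_nonneg f,
      sq_nonneg (‖f‖ - 2 * Real.sqrt α * ‖g‖)]
  have happ : R f = α⁻¹ • (f - A g) := hRapp f
  rw [happ]
  have hrpow : α ^ ((3 : ℝ) / 2) = α * Real.sqrt α := by
    rw [show (3:ℝ)/2 = 1 + 1/2 by norm_num, Real.rpow_add hα, Real.rpow_one,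
      ← Real.sqrt_eq_rpow]
  have hsqrtpos : 0 < Real.sqrt α := Real.sqrt_pos.mpr hα
  calc N (α⁻¹ • (f - A g)) = ‖α⁻¹‖ * N (f - A g) := map_smul_eq_mul N _ _
    _ ≤ α⁻¹ * (N f + N (A g)) := by
        rw [Real.norm_eq_abs, abs_of_pos (inv_pos.mpr hα)]
        exact mul_le_mul_of_nonneg_left (map_sub_le_add N f (A g)) (inv_pos.mpr hα).le
    _ ≤ α⁻¹ * (N f + M * ‖g‖) :=
        mul_le_mul_of_nonneg_left (add_le_add_right (hNM g) _) (inv_pos.mpr hα).le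
    _ ≤ α⁻¹ * (N f + M * (‖f‖ / (2 * Real.sqrt α))) :=
        mul_le_mul_of_nonneg_left
          (add_le_add_right (mul_le_mul_of_nonneg_left hbound hM0) _) (inv_pos.mpr hα).le
    _ = α⁻¹ * N f + M * ‖f‖ / (2 * α ^ ((3 : ℝ) / 2)) := by
        rw [hrpow]
        field_simp
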